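/- arXiv:2603.27635 — 4 statements merged into one kernel-verified Lean document; each statement's English description precedes it below -/
import Mathlib

section
/- Let N ≥ 1 be an integer and let ε_1, …, ε_n be integers with ε_i ≥ N for all i. Then the Lebesgue measure of the fundamental interval I_n(ε_1, …, ε_n) equals N^n/(q_n(q_n + q_{n−1})), where q_n, q_{n−1} are the convergent denominators built from ε_1, …, ε_n. -/
open MeasureTheory Filter Set
open scoped ENNReal

/-- The `N`-expansion map `T_N : [0,1] → [0,1]`,
`T_N x = N/x - ⌊N/x⌋` for `x ≠ 0`, `T_N 0 = 0`. -/
noncomputable def TN (N : ℕ) (x : ℝ) : ℝ :=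
  if x = 0 then 0 else (N : ℝ) / x - (⌊(N : ℝ) / x⌋ : ℝ)

/-- `digit N n x` is the `(n+1)`-st digit `ε_{n+1}(x)` of the `N`-expansion of `x`,
i.e. `ε_m(x) = digit N (m-1) x` for `m ≥ 1`. -/
noncomputable def digit (N : ℕ) (n : ℕ) (x : ℝ) : ℤ :=
  ⌊(N : ℝ) / ((TN N)^[n] x)⌋

/-- The set `E_M` of irrationals in `(0,1)` all of whose `N`-expansion digits lie in
`{N, …, M}`. -/
noncomputable def EM (N M : ℕ) : Set ℝ :=
  {x | x ∈ Set.Ioo (0 : ℝ) 1 ∧ Irrational x ∧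
    ∀ n : ℕ, (N : ℤ) ≤ digit N n x ∧ digit N n x ≤ (M : ℤ)}

/-- The set `F_{α,N}` of irrationals in `(0,1)` all of whose `N`-expansion digits
are at least `α`. -/
noncomputable def Fset (N : ℕ) (α : ℝ) : Set ℝ :=
  {x | x ∈ Set.Ioo (0 : ℝ) 1 ∧ Irrational x ∧ ∀ n : ℕ, α ≤ (digit N n x : ℝ)}

/-- The set `F_N` of irrationals in `(0,1)` whose `N`-expansion digits tend to infinity. -/
noncomputable def FNset (N : ℕ) : Set ℝ :=
  {x | x ∈ Set.Ioo (0 : ℝ) 1 ∧ Irrational x ∧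
    Filter.Tendsto (fun n => digit N n x) Filter.atTop Filter.atTop}

/-- Convergent denominators of the `N`-expansion with digit sequence `ε`
(where `ε i` is the `(i+1)`-st digit `ε_{i+1}`), shifted by one:
`qden N ε (n+1) = q_n`, so `qden N ε 0 = q_{-1} = 0`, `qden N ε 1 = q_0 = 1`,
and `q_n = ε_n q_{n-1} + N q_{n-2}`. -/
def qden (N : ℕ) (ε : ℕ → ℤ) : ℕ → ℤ
  | 0 => 0
  | 1 => 1
  | (n + 2) => ε n * qden N ε (n + 1) + (N : ℤ) * qden N ε n

/-- Convergent numerators of the `N`-expansion with digit sequence `ε`, shifted by one: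
`pnum N ε (n+1) = p_n`, so `pnum N ε 0 = p_{-1} = 1`, `pnum N ε 1 = p_0 = 0`,
and `p_n = ε_n p_{n-1} + N p_{n-2}`. -/
def pnum (N : ℕ) (ε : ℕ → ℤ) : ℕ → ℤ
  | 0 => 1
  | 1 => 0
  | (n + 2) => ε n * pnum N ε (n + 1) + (N : ℤ) * pnum N ε n

/-- The fundamental interval `I_n(ε_1, …, ε_n)`: irrationals in `(0,1)` whose first `n`
`N`-expansion digits are `ε 0, …, ε (n-1)` (i.e. `ε_i(x) = ε (i-1)` for `1 ≤ i ≤ n`). -/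
noncomputable def fundInterval (N : ℕ) (n : ℕ) (ε : ℕ → ℤ) : Set ℝ :=
  {x | x ∈ Set.Ioo (0 : ℝ) 1 ∧ Irrational x ∧ ∀ i < n, digit N i x = ε i}

lemma qden_aux (N : ℕ) (ε : ℕ → ℤ) (hN : 1 ≤ N) (hε : ∀ i, (N : ℤ) ≤ ε i) :
    ∀ n, 0 ≤ qden N ε n ∧ 1 ≤ qden N ε (n + 1) := by
  have hN' : (1 : ℤ) ≤ (N : ℤ) := by exact_mod_cast hN
  intro n
  induction n with
  | zero => simp [qden]
  | succ n ih =>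
    obtain ⟨h1, h2⟩ := ih
    refine ⟨le_trans zero_le_one h2, ?_⟩
    simp only [qden]
    nlinarith [hε n]

lemma pnum_aux (N : ℕ) (ε : ℕ → ℤ) (hN : 1 ≤ N) (hε : ∀ i, (N : ℤ) ≤ ε i) :
    ∀ n, 0 ≤ pnum N ε n ∧ 0 ≤ pnum N ε (n + 1) := by
  have hN' : (1 : ℤ) ≤ (N : ℤ) := by exact_mod_cast hN
  intro n
  induction n with
  | zero => simp [pnum]
  | succ n ih =>
    obtain ⟨h1, h2⟩ := ih
    refine ⟨h2, ?_⟩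
    simp only [pnum]
    nlinarith [hε n]

lemma pnum_ge (N : ℕ) (ε : ℕ → ℤ) (hN : 1 ≤ N) (hε : ∀ i, (N : ℤ) ≤ ε i) :
    ∀ n, 1 ≤ pnum N ε (n + 2) := by
  have hN' : (1 : ℤ) ≤ (N : ℤ) := by exact_mod_cast hN
  intro n
  induction n with
  | zero => simp [pnum]; nlinarith [hε 0]
  | succ n ih =>
    have h1 := (pnum_aux N ε hN hε (n + 1)).1
    have e : pnum N ε (n + 1 + 2) = ε (n + 1) * pnum N ε (n + 2) + (N : ℤ) * pnum N ε (n + 1) := rfl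
    rw [e]
    nlinarith [hε (n + 1)]

lemma dgap (N : ℕ) (ε : ℕ → ℤ) (hN : 1 ≤ N) (hε : ∀ i, (N : ℤ) ≤ ε i) :
    ∀ n, 0 ≤ qden N ε (n + 2) - pnum N ε (n + 2) ∧
      1 ≤ qden N ε (n + 3) - pnum N ε (n + 3) := by
  have hN' : (1 : ℤ) ≤ (N : ℤ) := by exact_mod_cast hN
  intro n
  induction n with
  | zero =>
    constructor
    · simp only [qden, pnum]
      nlinarith [hε 0]
    · show (1:ℤ) ≤ qden N ε (1 + 2) - pnum N ε (1 + 2)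
      simp only [qden, pnum]
      nlinarith [hε 0, hε 1]
  | succ n ih =>
    obtain ⟨h1, h2⟩ := ih
    refine ⟨by linarith, ?_⟩
    have e1 : qden N ε (n + 2 + 2) = ε (n + 2) * qden N ε (n + 3) + (N : ℤ) * qden N ε (n + 2) := rfl
    have e2 : pnum N ε (n + 2 + 2) = ε (n + 2) * pnum N ε (n + 3) + (N : ℤ) * pnum N ε (n + 2) := rfl
    show (1:ℤ) ≤ qden N ε (n + 2 + 2) - pnum N ε (n + 2 + 2)
    rw [e1, e2]
    nlinarith [hε (n + 2)]

lemma dge1 (N : ℕ) (ε : ℕ → ℤ) (hN : 1 ≤ N) (hε : ∀ i, (N : ℤ) ≤ ε i) :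
    ∀ n, pnum N ε (n + 1) ≤ qden N ε (n + 1) := by
  intro n
  match n with
  | 0 => simp [pnum, qden]
  | (m + 1) => linarith [(dgap N ε hN hε m).1]

lemma dge2 (N : ℕ) (ε : ℕ → ℤ) (hN : 1 ≤ N) (hε : ∀ i, (N : ℤ) ≤ ε i) :
    ∀ n, pnum N ε (n + 1) + pnum N ε n ≤ qden N ε (n + 1) + qden N ε n := by
  have hN' : (1 : ℤ) ≤ (N : ℤ) := by exact_mod_cast hN
  intro n
  match n with
  | 0 => simp [pnum, qden]
  | 1 => simp [pnum, qden]; nlinarith [hε 0]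
  | (m + 2) => linarith [(dgap N ε hN hε m).1, (dgap N ε hN hε m).2]

lemma shift (N : ℕ) (ε : ℕ → ℤ) :
    ∀ n, pnum N ε (n + 1) = (N : ℤ) * qden N (fun i => ε (i + 1)) n ∧
      qden N ε (n + 1) = ε 0 * qden N (fun i => ε (i + 1)) n + pnum N (fun i => ε (i + 1)) n := by
  intro n
  induction n using Nat.twoStepInduction with
  | zero => simp [pnum, qden]
  | one => simp [pnum, qden]
  | more n ih1 ih2 =>
    obtain ⟨ha1, ha2⟩ := ih1
    obtain ⟨hb1, hb2⟩ := ih2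
    have e1 : pnum N ε (n + 1 + 2) = ε (n + 1) * pnum N ε (n + 2) + (N : ℤ) * pnum N ε (n + 1) := rfl
    have e2 : qden N ε (n + 1 + 2) = ε (n + 1) * qden N ε (n + 2) + (N : ℤ) * qden N ε (n + 1) := rfl
    have e3 : qden N (fun i => ε (i + 1)) (n + 2)
        = ε (n + 1) * qden N (fun i => ε (i + 1)) (n + 1) + (N : ℤ) * qden N (fun i => ε (i + 1)) n := rfl
    have e4 : pnum N (fun i => ε (i + 1)) (n + 2)
        = ε (n + 1) * pnum N (fun i => ε (i + 1)) (n + 1) + (N : ℤ) * pnum N (fun i => ε (i + 1)) n := rfl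
    constructor
    · rw [e1, e3, hb1, ha1]; ring
    · rw [e2, e3, e4, hb2, ha2]; ring

lemma det (N : ℕ) (ε : ℕ → ℤ) :
    ∀ n, pnum N ε n * qden N ε (n + 1) - pnum N ε (n + 1) * qden N ε n = (-(N : ℤ)) ^ n := by
  intro n
  induction n with
  | zero => simp [pnum, qden]
  | succ n ih =>
    show pnum N ε (n + 1) * qden N ε (n + 2) - pnum N ε (n + 2) * qden N ε (n + 1) = _
    simp only [pnum, qden, pow_succ]
    linear_combination (-(N : ℤ)) * ih

lemma QT_pos (N : ℕ) (ε : ℕ → ℤ) (hN : 1 ≤ N) (hε : ∀ i, (N : ℤ) ≤ ε i) (n : ℕ)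
    {t : ℝ} (ht0 : 0 < t) :
    0 < (qden N ε (n + 1) : ℝ) + t * (qden N ε n : ℝ) := by
  have h1 : (0 : ℝ) ≤ (qden N ε n : ℝ) := by exact_mod_cast (qden_aux N ε hN hε n).1
  have h2 : (1 : ℝ) ≤ (qden N ε (n + 1) : ℝ) := by exact_mod_cast (qden_aux N ε hN hε n).2
  nlinarith

lemma PT_pos (N : ℕ) (ε : ℕ → ℤ) (hN : 1 ≤ N) (hε : ∀ i, (N : ℤ) ≤ ε i) (n : ℕ)
    {t : ℝ} (ht0 : 0 < t) :
    0 < (pnum N ε (n + 1) : ℝ) + t * (pnum N ε n : ℝ) := by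
  match n with
  | 0 => simp [pnum]; linarith
  | (m + 1) =>
    have h1 : (1 : ℝ) ≤ (pnum N ε (m + 2) : ℝ) := by exact_mod_cast pnum_ge N ε hN hε m
    have h2 : (0 : ℝ) ≤ (pnum N ε (m + 1) : ℝ) := by exact_mod_cast (pnum_aux N ε hN hε m).2
    nlinarith

lemma PT_lt_QT (N : ℕ) (ε : ℕ → ℤ) (hN : 1 ≤ N) (hε : ∀ i, (N : ℤ) ≤ ε i) (n : ℕ)
    {t : ℝ} (ht0 : 0 < t) (ht1 : t < 1) :
    (pnum N ε (n + 1) : ℝ) + t * (pnum N ε n : ℝ)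
      < (qden N ε (n + 1) : ℝ) + t * (qden N ε n : ℝ) := by
  match n with
  | 0 => simp [pnum, qden]; linarith
  | 1 =>
    have h0 : (N : ℝ) ≤ (ε 0 : ℝ) := by exact_mod_cast hε 0
    have e1 : pnum N ε 2 = (N : ℤ) := by simp [pnum]
    have e2 : qden N ε 2 = ε 0 := by simp [qden]
    rw [e1, e2]
    simp [pnum, qden]
    linarith
  | (m + 2) =>
    have h1 : (0 : ℝ) ≤ (qden N ε (m + 2) : ℝ) - (pnum N ε (m + 2) : ℝ) := by
      exact_mod_cast (dgap N ε hN hε m).1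
    have h2 : (1 : ℝ) ≤ (qden N ε (m + 3) : ℝ) - (pnum N ε (m + 3) : ℝ) := by
      exact_mod_cast (dgap N ε hN hε m).2
    nlinarith

lemma between_of_mul_neg {u v x : ℝ} (h : (x - u) * (x - v) < 0) :
    min u v < x ∧ x < max u v := by
  rcases le_total u v with huv | huv
  · rw [min_eq_left huv, max_eq_right huv]
    constructor <;> nlinarith
  · rw [min_eq_right huv, max_eq_left huv]
    constructor <;> nlinarith

lemma mul_neg_of_between {u v x : ℝ} (h1 : min u v < x) (h2 : x < max u v) :
    (x - u) * (x - v) < 0 := by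
  rcases le_total u v with huv | huv
  · rw [min_eq_left huv] at h1; rw [max_eq_right huv] at h2
    nlinarith
  · rw [min_eq_right huv] at h1; rw [max_eq_left huv] at h2
    nlinarith

lemma mem_fund_iff (N : ℕ) (hN : 1 ≤ N) :
    ∀ (n : ℕ) (ε : ℕ → ℤ), (∀ i, (N : ℤ) ≤ ε i) → ∀ x : ℝ, 0 < x → x < 1 → Irrational x →
      ((∀ i < n, digit N i x = ε i) ↔
        ∃ t : ℝ, 0 < t ∧ t < 1 ∧ Irrational t ∧
          x * ((qden N ε (n + 1) : ℝ) + t * (qden N ε n : ℝ))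
            = (pnum N ε (n + 1) : ℝ) + t * (pnum N ε n : ℝ)) := by
  intro n
  induction n with
  | zero =>
    intro ε hε x hx0 hx1 hxi
    constructor
    · intro _
      refine ⟨x, hx0, hx1, hxi, ?_⟩
      simp [qden, pnum]
    · intro _ i hi
      omega
  | succ n ih =>
    intro ε hε x hx0 hx1 hxi
    have hxne : x ≠ 0 := ne_of_gt hx0
    have hNne : N ≠ 0 := by omega
    have hNxi : Irrational ((N : ℝ) / x) := by
      have h1 : Irrational ((N : ℝ) * x⁻¹) := (hxi.inv).natCast_mul hNne
      rwa [div_eq_mul_inv]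
    have hy : TN N x = (N : ℝ) / x - (⌊(N : ℝ) / x⌋ : ℝ) := by simp [TN, hxne]
    have hyf : TN N x = Int.fract ((N : ℝ) / x) := by rw [hy, Int.self_sub_floor]
    have hyi : Irrational (TN N x) := by rw [hy]; exact hNxi.sub_intCast _
    have hy0 : 0 < TN N x := by
      have h1 := Int.fract_nonneg ((N : ℝ) / x)
      have h3 : TN N x ≠ 0 := by
        intro h
        exact (hyi.ne_int 0) (by simpa using h)
      rw [hyf] at h3 ⊢
      exact lt_of_le_of_ne h1 (Ne.symm h3)
    have hy1 : TN N x < 1 := by rw [hyf]; exact Int.fract_lt_one _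
    have hdig : ∀ i, digit N (i + 1) x = digit N i (TN N x) := by
      intro i
      unfold digit
      rw [Function.iterate_succ_apply]
    constructor
    · intro h
      have hfl : ⌊(N : ℝ) / x⌋ = ε 0 := by
        have h0 := h 0 (Nat.succ_pos n)
        simpa [digit] using h0
      have hxy : x * ((ε 0 : ℝ) + TN N x) = N := by
        rw [hy, hfl]
        field_simp
        ring
      obtain ⟨t, ht0, ht1, hti, hteq⟩ :=
        (ih (fun i => ε (i + 1)) (fun i => hε (i + 1)) (TN N x) hy0 hy1 hyi).mp
          (fun i hi => by rw [← hdig i]; exact h (i + 1) (by omega))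
      refine ⟨t, ht0, ht1, hti, ?_⟩
      rw [(shift N ε (n + 1)).1, (shift N ε (n + 1)).2, (shift N ε n).1, (shift N ε n).2]
      push_cast
      linear_combination (-x) * hteq
        + ((qden N (fun i => ε (i + 1)) (n + 1) : ℝ) + t * (qden N (fun i => ε (i + 1)) n : ℝ)) * hxy
    · rintro ⟨t, ht0, ht1, hti, hteq⟩
      rw [(shift N ε (n + 1)).1, (shift N ε (n + 1)).2, (shift N ε n).1, (shift N ε n).2] at hteq
      push_cast at hteq
      have hε' : ∀ i, (N : ℤ) ≤ (fun i => ε (i + 1)) i := fun i => hε (i + 1)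
      set QT : ℝ := (qden N (fun i => ε (i + 1)) (n + 1) : ℝ)
        + t * (qden N (fun i => ε (i + 1)) n : ℝ) with hQT
      set PT : ℝ := (pnum N (fun i => ε (i + 1)) (n + 1) : ℝ)
        + t * (pnum N (fun i => ε (i + 1)) n : ℝ) with hPT
      have hA : 0 < QT := QT_pos N _ hN hε' n ht0
      have hB : 0 < PT := PT_pos N _ hN hε' n ht0
      have hBA : PT < QT := PT_lt_QT N _ hN hε' n ht0 ht1
      have hfr0 : 0 < PT / QT := div_pos hB hA
      have hfr1 : PT / QT < 1 := (div_lt_one hA).mpr hBA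
      have h1 : x * ((ε 0 : ℝ) + PT / QT) = N := by
        field_simp
        linear_combination hteq
      have hNx : (ε 0 : ℝ) + PT / QT = (N : ℝ) / x := by
        rw [eq_div_iff hxne]
        linear_combination h1
      have hfl : ⌊(N : ℝ) / x⌋ = ε 0 := by
        rw [← hNx, Int.floor_intCast_add]
        have : ⌊PT / QT⌋ = 0 := Int.floor_eq_zero_iff.mpr ⟨le_of_lt hfr0, hfr1⟩
        omega
      have hyPT : TN N x = PT / QT := by
        rw [hy, hfl, ← hNx]
        ring
      have hyQT : TN N x * ((qden N (fun i => ε (i + 1)) (n + 1) : ℝ)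
          + t * (qden N (fun i => ε (i + 1)) n : ℝ))
          = (pnum N (fun i => ε (i + 1)) (n + 1) : ℝ)
          + t * (pnum N (fun i => ε (i + 1)) n : ℝ) := by
        rw [← hQT, ← hPT, hyPT]
        field_simp
      have hdy := (ih (fun i => ε (i + 1)) hε' (TN N x) hy0 hy1 hyi).mpr
        ⟨t, ht0, ht1, hti, hyQT⟩
      intro i hi
      match i with
      | 0 => simpa [digit] using hfl
      | (j + 1) =>
        rw [hdig j]
        exact hdy j (by omega)

set_option maxHeartbeats 2000000 in
/-- Exact length of a fundamental interval:
`|I_n(ε_1, …, ε_n)| = N^n / (q_n (q_n + q_{n-1}))`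
(recall `qden N ε (n+1) = q_n`). -/
theorem stmt_12 (N : ℕ) (hN : 1 ≤ N) (n : ℕ) (ε : ℕ → ℤ) (hε : ∀ i, (N : ℤ) ≤ ε i) :
    volume (fundInterval N n ε) =
      ENNReal.ofReal ((N : ℝ) ^ n /
        ((qden N ε (n + 1) : ℝ) * ((qden N ε (n + 1) : ℝ) + (qden N ε n : ℝ)))) := by
  have hNR : (1 : ℝ) ≤ (N : ℝ) := by exact_mod_cast hN
  have hQpos : (0 : ℝ) < (qden N ε (n + 1) : ℝ) := by
    have := (qden_aux N ε hN hε n).2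
    have : (1 : ℝ) ≤ (qden N ε (n + 1) : ℝ) := by exact_mod_cast this
    linarith
  have hQ'0 : (0 : ℝ) ≤ (qden N ε n : ℝ) := by exact_mod_cast (qden_aux N ε hN hε n).1
  have hP0 : (0 : ℝ) ≤ (pnum N ε (n + 1) : ℝ) := by exact_mod_cast (pnum_aux N ε hN hε n).2
  have hP'0 : (0 : ℝ) ≤ (pnum N ε n : ℝ) := by exact_mod_cast (pnum_aux N ε hN hε n).1
  have hPQ : (pnum N ε (n + 1) : ℝ) ≤ (qden N ε (n + 1) : ℝ) := by
    exact_mod_cast dge1 N ε hN hε n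
  have hPQ2 : (pnum N ε (n + 1) : ℝ) + (pnum N ε n : ℝ)
      ≤ (qden N ε (n + 1) : ℝ) + (qden N ε n : ℝ) := by exact_mod_cast dge2 N ε hN hε n
  have hQQpos : (0 : ℝ) < (qden N ε (n + 1) : ℝ) + (qden N ε n : ℝ) := by linarith
  have hD : (pnum N ε n : ℝ) * (qden N ε (n + 1) : ℝ)
      - (pnum N ε (n + 1) : ℝ) * (qden N ε n : ℝ) = (-(N : ℝ)) ^ n := by
    have := det N ε n
    push_cast
    exact_mod_cast this
  have hNne : ((N : ℝ)) ≠ 0 := by linarith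
  have hDne : ((-(N : ℝ)) ^ n) ≠ 0 := pow_ne_zero _ (by simpa using hNne)
  set P : ℝ := (pnum N ε (n + 1) : ℝ) with hP_def
  set P' : ℝ := (pnum N ε n : ℝ) with hP'_def
  set Q : ℝ := (qden N ε (n + 1) : ℝ) with hQ_def
  set Q' : ℝ := (qden N ε n : ℝ) with hQ'_def
  have hset : fundInterval N n ε =
      Ioo (min (P / Q) ((P + P') / (Q + Q'))) (max (P / Q) ((P + P') / (Q + Q')))
        \ Set.range ((↑) : ℚ → ℝ) := by
    ext x
    simp only [fundInterval, Set.mem_setOf_eq, Set.mem_diff, Set.mem_Ioo]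
    constructor
    · rintro ⟨⟨hx0, hx1⟩, hxi, hd⟩
      obtain ⟨t, ht0, ht1, hti, hteq⟩ := (mem_fund_iff N hN n ε hε x hx0 hx1 hxi).mp hd
      have hQt : 0 < Q + t * Q' := by nlinarith
      have hx : x = (P + t * P') / (Q + t * Q') := by
        rw [eq_div_iff (ne_of_gt hQt)]; exact hteq
      have e0 : x - P / Q = t * ((-(N : ℝ)) ^ n) / (Q * (Q + t * Q')) := by
        rw [hx, ← hD]; field_simp; ring
      have e1 : x - (P + P') / (Q + Q')
          = (t - 1) * ((-(N : ℝ)) ^ n) / ((Q + Q') * (Q + t * Q')) := by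
        rw [hx, ← hD]; field_simp; ring
      have hprod : (x - P / Q) * (x - (P + P') / (Q + Q')) < 0 := by
        rw [e0, e1, div_mul_div_comm]
        apply div_neg_of_neg_of_pos
        · have hD2 : 0 < ((-(N : ℝ)) ^ n) ^ 2 := by positivity
          have e2 : t * (-(N : ℝ)) ^ n * ((t - 1) * (-(N : ℝ)) ^ n)
              = (t * (t - 1)) * ((-(N : ℝ)) ^ n) ^ 2 := by ring
          rw [e2]
          exact mul_neg_of_neg_of_pos (by nlinarith) hD2
        · have h1 : 0 < Q * (Q + t * Q') := mul_pos hQpos hQt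
          have h2 : 0 < (Q + Q') * (Q + t * Q') := mul_pos hQQpos hQt
          nlinarith
      exact ⟨between_of_mul_neg hprod, hxi⟩
    · rintro ⟨⟨hxa, hxb⟩, hxr⟩
      have hxi : Irrational x := hxr
      have hM0a : 0 ≤ P / Q := div_nonneg hP0 hQpos.le
      have hM1a : 0 ≤ (P + P') / (Q + Q') := div_nonneg (by linarith) hQQpos.le
      have hM0b : P / Q ≤ 1 := (div_le_one hQpos).mpr hPQ
      have hM1b : (P + P') / (Q + Q') ≤ 1 := (div_le_one hQQpos).mpr hPQ2
      have hx0 : 0 < x := lt_of_le_of_lt (le_min hM0a hM1a) hxa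
      have hx1 : x < 1 := lt_of_lt_of_le hxb (max_le hM0b hM1b)
      have hprod := mul_neg_of_between hxa hxb
      have huv : (x * Q - P) * (x * (Q + Q') - (P + P')) < 0 := by
        have hre : (x * Q - P) * (x * (Q + Q') - (P + P'))
            = ((x - P / Q) * (x - (P + P') / (Q + Q'))) * (Q * (Q + Q')) := by
          field_simp
        rw [hre]
        exact mul_neg_of_neg_of_pos hprod (mul_pos hQpos hQQpos)
      obtain ⟨u, hu⟩ : ∃ u : ℝ, u = x * Q - P := ⟨_, rfl⟩
      obtain ⟨v, hv⟩ : ∃ v : ℝ, v = x * (Q + Q') - (P + P') := ⟨_, rfl⟩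
      rw [← hu, ← hv] at huv
      have hw : u - v = P' - x * Q' := by rw [hu, hv]; ring
      have hne : u - v ≠ 0 := by
        intro h
        have h' : u = v := by linarith
        rw [h'] at huv
        nlinarith
      obtain ⟨t, ht⟩ : ∃ t : ℝ, t = u / (u - v) := ⟨_, rfl⟩
      have ht0 : 0 < t := by
        rw [ht]
        rcases lt_trichotomy u 0 with h | h | h
        · have hv' : 0 < v := by nlinarith
          exact div_pos_iff.mpr (Or.inr ⟨h, by linarith⟩)
        · rw [h] at huv; nlinarith
        · have hv' : v < 0 := by nlinarith
          exact div_pos_iff.mpr (Or.inl ⟨h, by linarith⟩)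
      have ht1 : t < 1 := by
        have hd1 : t - 1 = v / (u - v) := by
          rw [ht]
          field_simp
          ring
        have h2 : v / (u - v) < 0 := by
          rcases lt_trichotomy u 0 with h | h | h
          · have hv' : 0 < v := by nlinarith
            exact div_neg_of_pos_of_neg hv' (by linarith)
          · rw [h] at huv; nlinarith
          · have hv' : v < 0 := by nlinarith
            exact div_neg_of_neg_of_pos hv' (by linarith)
        linarith
      have htmul : t * (u - v) = u := by rw [ht]; exact div_mul_cancel₀ _ hne
      have hteq : x * (Q + t * Q') = P + t * P' := by
        have expand2 : (x * (Q + t * Q') - (P + t * P')) * (u - v) = 0 := by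
          have e : (x * (Q + t * Q') - (P + t * P')) * (u - v)
              = (x * Q - P) * (u - v) + (t * (u - v)) * (x * Q' - P') := by ring
          rw [e, htmul, hu, hv]; ring
        rcases mul_eq_zero.mp expand2 with h | h
        · linarith
        · exact absurd h hne
      have hQt : 0 < Q + t * Q' := by nlinarith
      have hti : Irrational t := by
        rintro ⟨r, hr⟩
        apply hxi
        have hdenR : (Q : ℝ) + (r : ℝ) * Q' ≠ 0 := by rw [hr]; exact ne_of_gt hQt
        have hdenQ : ((qden N ε (n + 1) : ℚ) + r * (qden N ε n : ℚ)) ≠ 0 := by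
          intro h
          apply hdenR
          have : (((qden N ε (n + 1) : ℚ) + r * (qden N ε n : ℚ) : ℚ) : ℝ) = 0 := by
            rw [h]; simp
          push_cast at this
          rw [hQ_def, hQ'_def]
          convert this using 2
        refine ⟨((pnum N ε (n + 1) : ℚ) + r * (pnum N ε n : ℚ))
          / ((qden N ε (n + 1) : ℚ) + r * (qden N ε n : ℚ)), ?_⟩
        rw [← hr] at hteq
        push_cast
        rw [div_eq_iff (by push_cast at hdenQ ⊢; rw [← hQ_def, ← hQ'_def]; exact hdenR)]
        rw [← hP_def, ← hP'_def, ← hQ_def, ← hQ'_def]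
        linarith [hteq]
      refine ⟨⟨hx0, hx1⟩, hxi, ?_⟩
      exact (mem_fund_iff N hN n ε hε x hx0 hx1 hxi).mpr ⟨t, ht0, ht1, hti, hteq⟩
  rw [hset, measure_diff_null ((Set.countable_range _).measure_zero _), Real.volume_Ioo]
  congr 1
  rw [max_sub_min_eq_abs]
  have heq : (P + P') / (Q + Q') - P / Q = ((-(N : ℝ)) ^ n) / (Q * (Q + Q')) := by
    rw [← hD]; field_simp; ring
  rw [heq, abs_div, abs_of_pos (mul_pos hQpos hQQpos), abs_pow, abs_neg,
    abs_of_nonneg (by linarith : (0:ℝ) ≤ (N : ℝ))]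
end

section
/- Let N ≥ 1 be an integer, let ε_1, …, ε_n be integers with ε_i ≥ N for all i, and let k ≥ N be an integer. Then the ratio of Lebesgue measures of fundamental intervals satisfies N/(3k²) ≤ |I_{n+1}(ε_1, …, ε_n, k)| / |I_n(ε_1, …, ε_n)| ≤ 2N/k². -/
open MeasureTheory Filter Set
open scoped ENNReal

section aux
variable {N : ℕ} {ε : ℕ → ℤ} (hN : 1 ≤ N) (hε : ∀ i, (N : ℤ) ≤ ε i)

include hN hε

lemma eps_pos (i : ℕ) : (1 : ℤ) ≤ ε i := le_trans (by exact_mod_cast hN) (hε i)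

lemma qden_nonneg : ∀ n, 0 ≤ qden N ε n := by
  intro n
  induction n using Nat.twoStepInduction with
  | zero => simp [qden]
  | one => simp [qden]
  | more n ih1 ih2 =>
    show 0 ≤ ε n * qden N ε (n + 1) + (N : ℤ) * qden N ε n
    have h1 := eps_pos hN hε n
    nlinarith

lemma pnum_nonneg : ∀ n, 0 ≤ pnum N ε n := by
  intro n
  induction n using Nat.twoStepInduction with
  | zero => simp [pnum]
  | one => simp [pnum]
  | more n ih1 ih2 =>
    show 0 ≤ ε n * pnum N ε (n + 1) + (N : ℤ) * pnum N ε n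
    have h1 := eps_pos hN hε n
    nlinarith

lemma qden_one_le : ∀ n, 1 ≤ qden N ε (n + 1) := by
  intro n
  induction n using Nat.twoStepInduction with
  | zero => simp [qden]
  | one =>
    show 1 ≤ ε 0 * qden N ε 1 + (N : ℤ) * qden N ε 0
    simp [qden]; exact eps_pos hN hε 0
  | more n ih1 ih2 =>
    show 1 ≤ ε (n+1) * qden N ε (n + 2) + (N : ℤ) * qden N ε (n+1)
    have h1 := eps_pos hN hε (n+1)
    have h2 : (1:ℤ) ≤ (N:ℤ) := by exact_mod_cast hN
    nlinarith

lemma qden_mono : ∀ n, qden N ε n ≤ qden N ε (n + 1) := by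
  intro n
  induction n using Nat.twoStepInduction with
  | zero => simp [qden]
  | one =>
    show qden N ε 1 ≤ ε 0 * qden N ε 1 + (N : ℤ) * qden N ε 0
    simp [qden]; exact eps_pos hN hε 0
  | more n ih1 ih2 =>
    show qden N ε (n+2) ≤ ε (n+1) * qden N ε (n + 2) + (N : ℤ) * qden N ε (n+1)
    have h1 := eps_pos hN hε (n+1)
    have h2 : (1:ℤ) ≤ (N:ℤ) := by exact_mod_cast hN
    have h3 := qden_nonneg hN hε (n+2)
    have h4 := qden_nonneg hN hε (n+1)
    nlinarith

lemma pnum_le_qden : ∀ n, pnum N ε (n + 1) ≤ qden N ε (n + 1) := by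
  intro n
  induction n using Nat.twoStepInduction with
  | zero => simp [pnum, qden]
  | one =>
    show ε 0 * pnum N ε 1 + (N : ℤ) * pnum N ε 0 ≤ ε 0 * qden N ε 1 + (N : ℤ) * qden N ε 0
    simp [pnum, qden]; exact hε 0
  | more n ih1 ih2 =>
    show ε (n+1) * pnum N ε (n+2) + (N : ℤ) * pnum N ε (n+1)
        ≤ ε (n+1) * qden N ε (n+2) + (N : ℤ) * qden N ε (n+1)
    have h1 := eps_pos hN hε (n+1)
    have h2 : (1:ℤ) ≤ (N:ℤ) := by exact_mod_cast hN
    nlinarith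

lemma pnum_add_le : ∀ n, pnum N ε (n + 1) + pnum N ε n ≤ qden N ε (n + 1) + qden N ε n := by
  intro n
  cases n with
  | zero => simp [pnum, qden]
  | succ m => have := pnum_le_qden hN hε m; have := pnum_le_qden hN hε (m+1); omega

end aux

lemma pnum_shift (N : ℕ) (ε : ℕ → ℤ) : ∀ n, pnum N ε (n + 1) = (N : ℤ) * qden N (fun i => ε (i + 1)) n := by
  intro n
  induction n using Nat.twoStepInduction with
  | zero => simp [pnum, qden]
  | one =>
    show ε 0 * pnum N ε 1 + (N:ℤ) * pnum N ε 0 = (N:ℤ) * qden N (fun i => ε (i+1)) 1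
    simp [pnum, qden]
  | more n ih1 ih2 =>
    show ε (n+1) * pnum N ε (n+2) + (N:ℤ) * pnum N ε (n+1) = (N:ℤ) * qden N (fun i => ε (i+1)) (n+2)
    rw [ih1, ih2]
    show _ = (N:ℤ) * ((fun i => ε (i+1)) n * qden N (fun i => ε (i+1)) (n+1) + (N:ℤ) * qden N (fun i => ε (i+1)) n)
    ring

lemma qden_shift (N : ℕ) (ε : ℕ → ℤ) : ∀ n, qden N ε (n + 1) = ε 0 * qden N (fun i => ε (i + 1)) n + pnum N (fun i => ε (i + 1)) n := by
  intro n
  induction n using Nat.twoStepInduction with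
  | zero => simp [pnum, qden]
  | one =>
    show ε 0 * qden N ε 1 + (N:ℤ) * qden N ε 0 = _
    simp [pnum, qden]
  | more n ih1 ih2 =>
    show ε (n+1) * qden N ε (n+2) + (N:ℤ) * qden N ε (n+1)
      = ε 0 * qden N (fun i => ε (i+1)) (n+2) + pnum N (fun i => ε (i+1)) (n+2)
    rw [ih1, ih2]
    show _ = ε 0 * ((fun i => ε (i+1)) n * qden N (fun i => ε (i+1)) (n+1) + (N:ℤ) * qden N (fun i => ε (i+1)) n)
        + ((fun i => ε (i+1)) n * pnum N (fun i => ε (i+1)) (n+1) + (N:ℤ) * pnum N (fun i => ε (i+1)) n)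
    ring

lemma det_eq (N : ℕ) (ε : ℕ → ℤ) : ∀ n,
    pnum N ε (n + 1) * qden N ε n - pnum N ε n * qden N ε (n + 1) = -(-(N : ℤ)) ^ n := by
  intro n
  induction n with
  | zero => simp [pnum, qden]
  | succ n ih =>
    show (ε n * pnum N ε (n+1) + (N:ℤ) * pnum N ε n) * qden N ε (n+1)
        - pnum N ε (n+1) * (ε n * qden N ε (n+1) + (N:ℤ) * qden N ε n) = -(-(N:ℤ))^(n+1)
    have : (-(N:ℤ))^(n+1) = (-(N:ℤ)) * (-(N:ℤ))^n := by ring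
    rw [this]
    linear_combination (-(N:ℤ)) * ih

noncomputable def endA (N : ℕ) (ε : ℕ → ℤ) (n : ℕ) : ℝ :=
  (pnum N ε (n + 1) : ℝ) / (qden N ε (n + 1) : ℝ)

noncomputable def endB (N : ℕ) (ε : ℕ → ℤ) (n : ℕ) : ℝ :=
  ((pnum N ε (n + 1) : ℝ) + (pnum N ε n : ℝ)) / ((qden N ε (n + 1) : ℝ) + (qden N ε n : ℝ))

section endpoints
variable {N : ℕ} {ε : ℕ → ℤ} (hN : 1 ≤ N) (hε : ∀ i, (N : ℤ) ≤ ε i)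
include hN hε

lemma qden_pos_real (n : ℕ) : (0 : ℝ) < (qden N ε (n + 1) : ℝ) := by
  exact_mod_cast lt_of_lt_of_le zero_lt_one (qden_one_le hN hε n)

lemma qden_sum_pos_real (n : ℕ) : (0 : ℝ) < (qden N ε (n + 1) : ℝ) + (qden N ε n : ℝ) := by
  have h1 := qden_pos_real hN hε n
  have h2 : (0:ℝ) ≤ (qden N ε n : ℝ) := by exact_mod_cast qden_nonneg hN hε n
  linarith

lemma endA_nonneg (n : ℕ) : 0 ≤ endA N ε n := by
  have h1 := qden_pos_real hN hε n
  have h2 : (0:ℝ) ≤ (pnum N ε (n+1) : ℝ) := by exact_mod_cast pnum_nonneg hN hε (n+1)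
  exact div_nonneg h2 h1.le

lemma endB_nonneg (n : ℕ) : 0 ≤ endB N ε n := by
  have h1 := qden_sum_pos_real hN hε n
  have h2 : (0:ℝ) ≤ (pnum N ε (n+1) : ℝ) := by exact_mod_cast pnum_nonneg hN hε (n+1)
  have h3 : (0:ℝ) ≤ (pnum N ε n : ℝ) := by exact_mod_cast pnum_nonneg hN hε n
  exact div_nonneg (by linarith) h1.le

lemma endA_le_one (n : ℕ) : endA N ε n ≤ 1 := by
  rw [endA, div_le_one (qden_pos_real hN hε n)]
  exact_mod_cast pnum_le_qden hN hε n

lemma endB_le_one (n : ℕ) : endB N ε n ≤ 1 := by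
  rw [endB, div_le_one (qden_sum_pos_real hN hε n)]
  have := pnum_add_le hN hε n
  push_cast
  exact_mod_cast this

lemma endA_succ (n : ℕ) :
    endA N ε (n + 1) = (N : ℝ) / ((ε 0 : ℝ) + endA N (fun i => ε (i + 1)) n) := by
  have hε' : ∀ i, (N : ℤ) ≤ (fun i => ε (i + 1)) i := fun i => hε (i + 1)
  have hq' := qden_pos_real hN hε' n
  have hp' : (0:ℝ) ≤ (pnum N (fun i => ε (i+1)) (n+1) : ℝ) := by
    exact_mod_cast pnum_nonneg hN hε' (n+1)
  have hden : (0:ℝ) < (ε 0 : ℝ) * (qden N (fun i => ε (i+1)) (n+1) : ℝ)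
      + (pnum N (fun i => ε (i+1)) (n+1) : ℝ) := by
    have he : (1:ℝ) ≤ (ε 0 : ℝ) := by exact_mod_cast eps_pos hN hε 0
    nlinarith
  have hp := pnum_shift N ε (n + 1)
  have hq := qden_shift N ε (n + 1)
  rw [endA]
  rw [show (pnum N ε (n+2) : ℝ) = (N : ℝ) * (qden N (fun i => ε (i+1)) (n+1) : ℝ) by exact_mod_cast congrArg (Int.cast : ℤ → ℝ) hp]
  rw [show (qden N ε (n+2) : ℝ) = (ε 0 : ℝ) * (qden N (fun i => ε (i+1)) (n+1) : ℝ) + (pnum N (fun i => ε (i+1)) (n+1) : ℝ) by exact_mod_cast congrArg (Int.cast : ℤ → ℝ) hq]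
  rw [endA]
  have he : (1:ℝ) ≤ (ε 0 : ℝ) := by exact_mod_cast eps_pos hN hε 0
  have hpos2 : (0:ℝ) < (ε 0 : ℝ) + (pnum N (fun i => ε (i+1)) (n+1) : ℝ) / (qden N (fun i => ε (i+1)) (n+1) : ℝ) := by
    have := div_nonneg hp' hq'.le; linarith
  rw [div_eq_div_iff hden.ne' hpos2.ne']
  field_simp

lemma endB_succ (n : ℕ) :
    endB N ε (n + 1) = (N : ℝ) / ((ε 0 : ℝ) + endB N (fun i => ε (i + 1)) n) := by
  have hε' : ∀ i, (N : ℤ) ≤ (fun i => ε (i + 1)) i := fun i => hε (i + 1)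
  have hq' := qden_sum_pos_real hN hε' n
  have hp1 : (0:ℝ) ≤ (pnum N (fun i => ε (i+1)) (n+1) : ℝ) := by
    exact_mod_cast pnum_nonneg hN hε' (n+1)
  have hp0 : (0:ℝ) ≤ (pnum N (fun i => ε (i+1)) n : ℝ) := by
    exact_mod_cast pnum_nonneg hN hε' n
  have he : (1:ℝ) ≤ (ε 0 : ℝ) := by exact_mod_cast eps_pos hN hε 0
  have hden : (0:ℝ) < (ε 0 : ℝ) * ((qden N (fun i => ε (i+1)) (n+1) : ℝ) + (qden N (fun i => ε (i+1)) n : ℝ))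
      + ((pnum N (fun i => ε (i+1)) (n+1) : ℝ) + (pnum N (fun i => ε (i+1)) n : ℝ)) := by
    nlinarith
  have hp2 := pnum_shift N ε (n + 1)
  have hp3 := pnum_shift N ε n
  have hq2 := qden_shift N ε (n + 1)
  have hq3 := qden_shift N ε n
  rw [endB]
  rw [show ((pnum N ε (n+2) : ℝ) + (pnum N ε (n+1) : ℝ)) = (N : ℝ) * ((qden N (fun i => ε (i+1)) (n+1) : ℝ) + (qden N (fun i => ε (i+1)) n : ℝ)) by push_cast [hp2, hp3]; ring]
  rw [show ((qden N ε (n+2) : ℝ) + (qden N ε (n+1) : ℝ)) = (ε 0 : ℝ) * ((qden N (fun i => ε (i+1)) (n+1) : ℝ) + (qden N (fun i => ε (i+1)) n : ℝ)) + ((pnum N (fun i => ε (i+1)) (n+1) : ℝ) + (pnum N (fun i => ε (i+1)) n : ℝ)) by push_cast [hq2, hq3]; ring]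
  rw [endB]
  have hpos2 : (0:ℝ) < (ε 0 : ℝ) + ((pnum N (fun i => ε (i+1)) (n+1) : ℝ) + (pnum N (fun i => ε (i+1)) n : ℝ)) / ((qden N (fun i => ε (i+1)) (n+1) : ℝ) + (qden N (fun i => ε (i+1)) n : ℝ)) := by
    have := div_nonneg (by linarith : (0:ℝ) ≤ (pnum N (fun i => ε (i+1)) (n+1) : ℝ) + (pnum N (fun i => ε (i+1)) n : ℝ)) hq'.le
    linarith
  rw [div_eq_div_iff hden.ne' hpos2.ne']
  field_simp

end endpoints

lemma TN_irrational {N : ℕ} (hN : 1 ≤ N) {x : ℝ} (hx : Irrational x) :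
    Irrational (TN N x) := by
  rw [TN, if_neg hx.ne_zero]
  exact (hx.natCast_div (by omega)).sub_intCast _

lemma TN_mem {N : ℕ} (hN : 1 ≤ N) {x : ℝ} (hx : Irrational x) :
    TN N x ∈ Set.Ioo (0 : ℝ) 1 := by
  have h : TN N x = Int.fract ((N : ℝ) / x) := by rw [TN, if_neg hx.ne_zero, Int.fract]
  have hfr : 0 ≤ TN N x := by rw [h]; exact Int.fract_nonneg _
  constructor
  · rcases hfr.lt_or_eq with h' | h'
    · exact h'
    · exact absurd h'.symm (TN_irrational hN hx).ne_zero
  · rw [h]; exact Int.fract_lt_one _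

lemma minmax_div (Nr e s t : ℝ) (hNr : 0 ≤ Nr) (he : 0 < e) (hs : 0 ≤ s) (ht : 0 ≤ t) :
    min (Nr / (e + s)) (Nr / (e + t)) = Nr / (e + max s t) ∧
      max (Nr / (e + s)) (Nr / (e + t)) = Nr / (e + min s t) := by
  have key : ∀ u v : ℝ, 0 ≤ u → u ≤ v → Nr / (e + v) ≤ Nr / (e + u) := by
    intro u v hu huv
    rw [div_le_div_iff₀ (by linarith) (by linarith)]
    nlinarith
  rcases le_total s t with h | h
  · rw [max_eq_right h, min_eq_left h, min_eq_right (key s t hs h), max_eq_left (key s t hs h)]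
    exact ⟨rfl, rfl⟩
  · rw [max_eq_left h, min_eq_right h, min_eq_left (key t s ht h), max_eq_right (key t s ht h)]
    exact ⟨rfl, rfl⟩

lemma step_iff (N : ℕ) (hN : 1 ≤ N) (ε0 : ℤ) (hε0 : (N : ℤ) ≤ ε0) (a b : ℝ)
    (ha : 0 ≤ a) (hb : b ≤ 1) (hab : a ≤ b) (x : ℝ) (hx0 : x ≠ 0) :
    (x ∈ Set.Ioo (0:ℝ) 1 ∧ ⌊(N:ℝ)/x⌋ = ε0 ∧ a < (N:ℝ)/x - (ε0:ℝ) ∧ (N:ℝ)/x - (ε0:ℝ) < b)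
      ↔ ((N:ℝ)/((ε0:ℝ)+b) < x ∧ x < (N:ℝ)/((ε0:ℝ)+a)) := by
  have hN1 : (1:ℝ) ≤ (N:ℝ) := by exact_mod_cast hN
  have he : (N:ℝ) ≤ (ε0:ℝ) := by exact_mod_cast hε0
  have hea : (0:ℝ) < (ε0:ℝ) + a := by linarith
  have heb : (0:ℝ) < (ε0:ℝ) + b := by linarith
  constructor
  · rintro ⟨⟨hx1, hx2⟩, hf, h1, h2⟩
    have hc : (N:ℝ)/x * x = N := div_mul_cancel₀ _ (ne_of_gt hx1)
    constructor
    · rw [div_lt_iff₀ heb]; nlinarith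
    · rw [lt_div_iff₀ hea]; nlinarith
  · rintro ⟨h1, h2⟩
    have hx1 : 0 < x := lt_trans (by positivity) h1
    have k1' : x * ((ε0:ℝ) + a) < N := (lt_div_iff₀ hea).mp h2
    have k2' : (N:ℝ) < x * ((ε0:ℝ) + b) := (div_lt_iff₀ heb).mp h1
    have k1 : (ε0:ℝ) + a < (N:ℝ)/x := (lt_div_iff₀ hx1).mpr (by nlinarith)
    have k2 : (N:ℝ)/x < (ε0:ℝ) + b := (div_lt_iff₀ hx1).mpr (by nlinarith)
    have hone : (N:ℝ)/((ε0:ℝ)+a) ≤ 1 := by rw [div_le_one hea]; linarith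
    refine ⟨⟨hx1, lt_of_lt_of_le h2 hone⟩, ?_, by linarith, by linarith⟩
    rw [Int.floor_eq_iff]
    constructor
    · linarith
    · push_cast; linarith

lemma fund_eq (N : ℕ) (hN : 1 ≤ N) : ∀ (n : ℕ) (ε : ℕ → ℤ), (∀ i, (N : ℤ) ≤ ε i) →
    fundInterval N n ε =
      {x | Irrational x ∧ min (endA N ε n) (endB N ε n) < x ∧ x < max (endA N ε n) (endB N ε n)} := by
  intro n
  induction n with
  | zero =>
    intro ε hε
    ext x
    simp only [fundInterval, Set.mem_setOf_eq, Set.mem_Ioo, Nat.not_lt_zero, false_implies,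
      implies_true, and_true]
    have hA : endA N ε 0 = 0 := by simp [endA, pnum, qden]
    have hB : endB N ε 0 = 1 := by simp [endB, pnum, qden]
    rw [hA, hB]
    norm_num
    tauto
  | succ n ih =>
    intro ε hε
    have hε' : ∀ i, (N : ℤ) ≤ (fun i => ε (i + 1)) i := fun i => hε (i + 1)
    have ih' := ih (fun i => ε (i + 1)) hε'
    have ha : 0 ≤ min (endA N (fun i => ε (i+1)) n) (endB N (fun i => ε (i+1)) n) :=
      le_min (endA_nonneg hN hε' n) (endB_nonneg hN hε' n)
    have hb : max (endA N (fun i => ε (i+1)) n) (endB N (fun i => ε (i+1)) n) ≤ 1 :=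
      max_le (endA_le_one hN hε' n) (endB_le_one hN hε' n)
    have heps : (1:ℝ) ≤ (ε 0 : ℝ) := by exact_mod_cast eps_pos hN hε 0
    have hmm := minmax_div (N:ℝ) (ε 0 : ℝ) (endA N (fun i => ε (i+1)) n)
      (endB N (fun i => ε (i+1)) n) (by positivity) (by linarith)
      (endA_nonneg hN hε' n) (endB_nonneg hN hε' n)
    have hmin : min (endA N ε (n+1)) (endB N ε (n+1)) =
        (N:ℝ)/((ε 0:ℝ) + max (endA N (fun i => ε (i+1)) n) (endB N (fun i => ε (i+1)) n)) := by
      rw [endA_succ hN hε n, endB_succ hN hε n]; exact hmm.1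
    have hmax : max (endA N ε (n+1)) (endB N ε (n+1)) =
        (N:ℝ)/((ε 0:ℝ) + min (endA N (fun i => ε (i+1)) n) (endB N (fun i => ε (i+1)) n)) := by
      rw [endA_succ hN hε n, endB_succ hN hε n]; exact hmm.2
    ext x
    simp only [Set.mem_setOf_eq]
    constructor
    · rintro ⟨hx01, hx, hd⟩
      have hx0 : x ≠ 0 := hx.ne_zero
      have hf : ⌊(N:ℝ)/x⌋ = ε 0 := by simpa [digit] using hd 0 (Nat.succ_pos n)
      have hT : TN N x ∈ fundInterval N n (fun i => ε (i + 1)) := by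
        refine ⟨TN_mem hN hx, TN_irrational hN hx, fun i hi => ?_⟩
        have := hd (i + 1) (by omega)
        simpa [digit, Function.iterate_succ_apply] using this
      rw [ih'] at hT
      obtain ⟨hTirr, hT1, hT2⟩ := hT
      have hTv : TN N x = (N:ℝ)/x - (ε 0 : ℝ) := by rw [TN, if_neg hx0, hf]
      rw [hTv] at hT1 hT2
      have := (step_iff N hN (ε 0) (hε 0) _ _ ha hb min_le_max x hx0).mp ⟨hx01, hf, hT1, hT2⟩
      exact ⟨hx, by rw [hmin]; exact this.1, by rw [hmax]; exact this.2⟩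
    · rintro ⟨hx, h1, h2⟩
      rw [hmin] at h1
      rw [hmax] at h2
      have hx0 : x ≠ 0 := hx.ne_zero
      obtain ⟨hx01, hf, hTa, hTb⟩ :=
        (step_iff N hN (ε 0) (hε 0) _ _ ha hb min_le_max x hx0).mpr ⟨h1, h2⟩
      have hTv : TN N x = (N:ℝ)/x - (ε 0 : ℝ) := by rw [TN, if_neg hx0, hf]
      have hT : TN N x ∈ fundInterval N n (fun i => ε (i + 1)) := by
        rw [ih']
        exact ⟨TN_irrational hN hx, by rw [hTv]; exact hTa, by rw [hTv]; exact hTb⟩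
      refine ⟨hx01, hx, fun i hi => ?_⟩
      cases i with
      | zero => simpa [digit] using hf
      | succ j =>
        have := hT.2.2 j (by omega)
        simpa [digit, Function.iterate_succ_apply] using this

lemma vol_irr_Ioo (a b : ℝ) :
    volume {x : ℝ | Irrational x ∧ a < x ∧ x < b} = ENNReal.ofReal (b - a) := by
  have hset : {x : ℝ | Irrational x ∧ a < x ∧ x < b}
      = Set.Ioo a b \ Set.range ((↑) : ℚ → ℝ) := by
    ext x
    simp only [Set.mem_setOf_eq, Set.mem_diff, Set.mem_Ioo, Irrational]
    tauto
  rw [hset, measure_diff_null ((Set.countable_range _).measure_zero _), Real.volume_Ioo]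

lemma vol_fund {N : ℕ} {ε : ℕ → ℤ} (hN : 1 ≤ N) (hε : ∀ i, (N : ℤ) ≤ ε i) (n : ℕ) :
    (volume (fundInterval N n ε)).toReal
      = (N:ℝ)^n / ((qden N ε (n+1) : ℝ) * ((qden N ε (n+1) : ℝ) + (qden N ε n : ℝ))) := by
  have hq1 := qden_pos_real hN hε n
  have hq2 := qden_sum_pos_real hN hε n
  rw [fund_eq N hN n ε hε, vol_irr_Ioo, ENNReal.toReal_ofReal (sub_nonneg.mpr min_le_max),
    max_sub_min_eq_abs]
  have hd : endA N ε n - endB N ε n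
      = ((pnum N ε (n+1) * qden N ε n - pnum N ε n * qden N ε (n+1) : ℤ) : ℝ)
        / ((qden N ε (n+1) : ℝ) * ((qden N ε (n+1) : ℝ) + (qden N ε n : ℝ))) := by
    rw [endA, endB]
    field_simp
    push_cast
    ring
  rw [abs_sub_comm, hd, det_eq, abs_div, abs_of_pos (mul_pos hq1 hq2)]
  congr 1
  push_cast
  norm_num

/-- Ratio of lengths of successive fundamental intervals: for a digit `k = ε (n) ≥ N`
appended to `(ε_1, …, ε_n)`,
`N/(3k²) ≤ |I_{n+1}(ε_1, …, ε_n, k)| / |I_n(ε_1, …, ε_n)| ≤ 2N/k²`. -/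
theorem stmt_14 (N : ℕ) (hN : 1 ≤ N) (n : ℕ) (ε : ℕ → ℤ) (hε : ∀ i, (N : ℤ) ≤ ε i) :
    (N : ℝ) / (3 * (ε n : ℝ) ^ 2) ≤
        (volume (fundInterval N (n + 1) ε)).toReal / (volume (fundInterval N n ε)).toReal ∧
      (volume (fundInterval N (n + 1) ε)).toReal / (volume (fundInterval N n ε)).toReal ≤
        2 * (N : ℝ) / (ε n : ℝ) ^ 2 := by
  rw [vol_fund hN hε (n+1), vol_fund hN hε n, show n+1+1 = n+2 from rfl]
  set Q : ℝ := (qden N ε (n+1) : ℝ) with hQdef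
  set R : ℝ := (qden N ε n : ℝ) with hRdef
  set S : ℝ := (qden N ε (n+2) : ℝ) with hSdef
  set k : ℝ := (ε n : ℝ) with hkdef
  clear_value Q R S k
  have hNk : (N:ℝ) ≤ k := by rw [hkdef]; exact_mod_cast hε n
  have hN1 : (1:ℝ) ≤ (N:ℝ) := by exact_mod_cast hN
  have hk1 : (1:ℝ) ≤ k := le_trans hN1 hNk
  have hQ1 : (1:ℝ) ≤ Q := by rw [hQdef]; exact_mod_cast qden_one_le hN hε n
  have hR0 : (0:ℝ) ≤ R := by rw [hRdef]; exact_mod_cast qden_nonneg hN hε n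
  have hRQ : R ≤ Q := by rw [hRdef, hQdef]; exact_mod_cast qden_mono hN hε n
  have hQS : Q ≤ S := by rw [hQdef, hSdef]; exact_mod_cast qden_mono hN hε (n+1)
  have hS : S = k * Q + (N:ℝ) * R := by
    rw [hSdef, hkdef, hQdef, hRdef]
    have h : qden N ε (n+2) = ε n * qden N ε (n+1) + (N:ℤ) * qden N ε n := rfl
    exact_mod_cast congrArg (Int.cast : ℤ → ℝ) h
  have hQ0 : (0:ℝ) < Q := by linarith
  have hS0 : (0:ℝ) < S := by linarith
  have hQR0 : (0:ℝ) < Q + R := by linarith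
  have hSQ0 : (0:ℝ) < S + Q := by linarith
  have hN0 : (0:ℝ) < (N:ℝ) := by linarith
  have hk0 : (0:ℝ) < k := by linarith
  have hrat : (N:ℝ)^(n+1) / (S * (S + Q)) / ((N:ℝ)^n / (Q * (Q + R)))
      = (N:ℝ) * (Q * (Q + R)) / (S * (S + Q)) := by
    have h1 : S * (S + Q) ≠ 0 := by positivity
    have h2 : Q * (Q + R) ≠ 0 := by positivity
    have h3 : (N:ℝ)^n ≠ 0 := by positivity
    field_simp
    ring
  rw [hrat]
  have hkQ : (0:ℝ) ≤ k * Q := by positivity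
  have hNR : (0:ℝ) ≤ (N:ℝ) * R := by positivity
  have hNkR : (0:ℝ) ≤ (k - (N:ℝ)) * R := mul_nonneg (by linarith) hR0
  have hkQ1 : Q ≤ k * Q := by nlinarith [mul_nonneg (sub_nonneg.mpr hk1) (by linarith : (0:ℝ) ≤ Q)]
  have hNRkQ : (N:ℝ) * R ≤ k * Q := mul_le_mul hNk hRQ hR0 (by linarith)
  constructor
  · rw [div_le_div_iff₀ (by nlinarith) (mul_pos hS0 hSQ0)]
    have t1 : S ≤ k * (Q + R) := by rw [hS]; nlinarith
    have t2 : S + Q ≤ 3 * k * Q := by rw [hS]; linarith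
    have t3 : S * (S + Q) ≤ (k * (Q + R)) * (3 * k * Q) :=
      mul_le_mul t1 t2 (by linarith) (by positivity)
    linarith only [mul_le_mul_of_nonneg_left t3 (le_of_lt hN0)]
  · rw [div_le_div_iff₀ (mul_pos hS0 hSQ0) (by positivity)]
    have u1 : k * Q ≤ S := by rw [hS]; linarith
    have u2 : k * Q ≤ S + Q := by linarith
    have u3 : (k * Q) * (k * Q) ≤ S * (S + Q) := mul_le_mul u1 u2 hkQ (by linarith)
    have u4 : Q * R ≤ Q * Q := mul_le_mul_of_nonneg_left hRQ (by linarith)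
    linarith only [mul_le_mul_of_nonneg_left u3 (by positivity : (0:ℝ) ≤ 2 * (N:ℝ)),
      mul_le_mul_of_nonneg_left u4 (mul_nonneg (le_of_lt hN0) (by positivity : (0:ℝ) ≤ k^2))]
end

section
/- Let N ≥ 1 be an integer, M ≥ N an integer, and s ∈ (0,1). Suppose that for every n ≥ 1 and every sequence of integers (ε_1, …, ε_{n−1}) ∈ {N, …, M}^{n−1} one has |I_{n−1}(ε_1, …, ε_{n−1})|^s ≥ Σ_{k=N}^{M} |I_n(ε_1, …, ε_{n−1}, k)|^s. Then dim_H(E_M) ≤ s. -/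
open MeasureTheory Filter Set
open scoped ENNReal

open scoped Topology

lemma TN_good {N : ℕ} (hN : 1 ≤ N) {x : ℝ} (hx : x ∈ Set.Ioo (0:ℝ) 1) (hirr : Irrational x) :
    TN N x ∈ Set.Ioo (0:ℝ) 1 ∧ Irrational (TN N x) := by
  have hx0 : x ≠ 0 := ne_of_gt hx.1
  have hdiv : Irrational ((N:ℝ) / x) := hirr.natCast_div (by omega)
  have hT : TN N x = (N:ℝ)/x - (⌊(N:ℝ)/x⌋ : ℝ) := by simp [TN, hx0]
  have hirr' : Irrational (TN N x) := by rw [hT]; exact hdiv.sub_intCast _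
  refine ⟨⟨?_, ?_⟩, hirr'⟩
  · have h0 : (0:ℝ) ≤ TN N x := by rw [hT]; exact sub_nonneg.2 (Int.floor_le _)
    rcases lt_or_eq_of_le h0 with h | h
    · exact h
    · exact absurd h.symm (by simpa using hirr'.ne_zero)
  · rw [hT]
    have := Int.lt_floor_add_one ((N:ℝ)/x)
    linarith

lemma digit_succ (N : ℕ) (i : ℕ) (x : ℝ) : digit N (i+1) x = digit N i (TN N x) := by
  simp [digit, Function.iterate_succ_apply]

lemma digit_zero (N : ℕ) (x : ℝ) : digit N 0 x = ⌊(N:ℝ)/x⌋ := by simp [digit]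

lemma x_eq_div {N : ℕ} (hN : 1 ≤ N) {x : ℝ} (hx : x ∈ Set.Ioo (0:ℝ) 1) :
    x = (N:ℝ) / ((digit N 0 x : ℝ) + TN N x) := by
  have hx0 : x ≠ 0 := ne_of_gt hx.1
  have hsum : (digit N 0 x : ℝ) + TN N x = (N:ℝ)/x := by
    rw [digit_zero]; simp [TN, hx0]
  rw [hsum]
  have hNne : (N:ℝ) ≠ 0 := by positivity
  field_simp

lemma lb_of_digit_le {N M : ℕ} (hN : 1 ≤ N) {x : ℝ} (hx : x ∈ Set.Ioo (0:ℝ) 1)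
    (hd : digit N 0 x ≤ (M:ℤ)) : (N:ℝ)/((M:ℝ)+1) < x := by
  have hx0 : 0 < x := hx.1
  have h1 : (N:ℝ)/x < (M:ℝ) + 1 := by
    have h2 := Int.lt_floor_add_one ((N:ℝ)/x)
    rw [← digit_zero N x] at h2
    have : (digit N 0 x : ℝ) ≤ (M:ℝ) := by exact_mod_cast hd
    linarith
  rw [div_lt_iff₀ hx0] at h1
  rw [div_lt_iff₀ (by positivity)]
  linarith

noncomputable def cM (M : ℕ) : ℝ := ((M:ℝ)+1)^2/((M:ℝ)+2)^2

lemma cM_pos (M : ℕ) : 0 < cM M := by unfold cM; positivity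

lemma cM_lt_one (M : ℕ) : cM M < 1 := by
  unfold cM
  rw [div_lt_one (by positivity)]
  nlinarith [Nat.cast_nonneg (α := ℝ) M]

lemma step_est {N M : ℕ} (hN : 1 ≤ N) (a x' y' : ℝ) (haN : (N:ℝ) ≤ a)
    (hx' : x' ∈ Set.Ioo (0:ℝ) 1) (hy' : y' ∈ Set.Ioo (0:ℝ) 1)
    (hlbx : (N:ℝ)/((M:ℝ)+1) < x') (hlby : (N:ℝ)/((M:ℝ)+1) < y') :
    |(N:ℝ)/(a + x') - (N:ℝ)/(a + y')| ≤ cM M * |x' - y'| := by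
  have hN1 : (1:ℝ) ≤ (N:ℝ) := by exact_mod_cast hN
  have hM1 : (0:ℝ) < (M:ℝ) + 1 := by positivity
  have hax : 0 < a + x' := by nlinarith [hx'.1]
  have hay : 0 < a + y' := by nlinarith [hy'.1]
  have haxc : (N:ℝ) * ((M:ℝ)+2) ≤ (a + x') * ((M:ℝ)+1) := by
    have := (div_lt_iff₀ hM1).1 hlbx
    nlinarith
  have hayc : (N:ℝ) * ((M:ℝ)+2) ≤ (a + y') * ((M:ℝ)+1) := by
    have := (div_lt_iff₀ hM1).1 hlby
    nlinarith
  have hprod : ((N:ℝ) * ((M:ℝ)+2)) * ((N:ℝ) * ((M:ℝ)+2)) ≤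
      ((a + x') * ((M:ℝ)+1)) * ((a + y') * ((M:ℝ)+1)) :=
    mul_le_mul haxc hayc (by positivity) (le_trans (by positivity) haxc)
  have hDpos : 0 < (a + x') * (a + y') := mul_pos hax hay
  have hND : (N:ℝ) ≤ cM M * ((a + x') * (a + y')) := by
    rw [cM, div_mul_eq_mul_div, le_div_iff₀ (by positivity)]
    nlinarith [hprod, mul_nonneg (sub_nonneg.2 hN1) (sq_nonneg ((M:ℝ)+2))]
  have hdiff : (N:ℝ)/(a + x') - (N:ℝ)/(a + y') = (N:ℝ) * (y' - x') / ((a + x') * (a + y')) := by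
    rw [div_sub_div _ _ hax.ne' hay.ne']
    congr 1
    ring
  have habs : |(N:ℝ)/(a + x') - (N:ℝ)/(a + y')| = (N:ℝ) * |y' - x'| / ((a + x') * (a + y')) := by
    rw [hdiff, abs_div, abs_of_pos hDpos, abs_mul, abs_of_nonneg (by positivity : (0:ℝ) ≤ (N:ℝ))]
  rw [habs, div_le_iff₀ hDpos, abs_sub_comm y' x']
  nlinarith [mul_le_mul_of_nonneg_right hND (abs_nonneg (x' - y'))]

lemma contract {N M : ℕ} (hN : 1 ≤ N) (hNM : N ≤ M) :
    ∀ n : ℕ, ∀ x y : ℝ, x ∈ Set.Ioo (0:ℝ) 1 → y ∈ Set.Ioo (0:ℝ) 1 →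
      Irrational x → Irrational y →
      (∀ i < n, digit N i x = digit N i y ∧ (N:ℤ) ≤ digit N i x ∧ digit N i x ≤ (M:ℤ)) →
      |x - y| ≤ (cM M)^n / cM M := by
  intro n
  induction n with
  | zero =>
    intro x y hx hy _ _ _
    have h1 : (1:ℝ) ≤ 1 / cM M := by
      rw [le_div_iff₀ (cM_pos M)]
      simpa using (cM_lt_one M).le
    have : |x - y| ≤ 1 := by
      rw [abs_le]; constructor <;> [nlinarith [hx.1, hx.2, hy.1, hy.2]; nlinarith [hx.1, hx.2, hy.1, hy.2]]
    calc |x - y| ≤ 1 := this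
      _ ≤ (cM M)^0 / cM M := by simpa using h1
  | succ n ih =>
    intro x y hx hy hxi hyi hd
    rcases Nat.eq_zero_or_pos n with hn0 | hn1
    · subst hn0
      have hc : (cM M)^1 / cM M = 1 := by
        rw [pow_one, div_self (ne_of_gt (cM_pos M))]
      rw [hc, abs_le]
      constructor <;> nlinarith [hx.1, hx.2, hy.1, hy.2]
    · -- n ≥ 1
      obtain ⟨hx'Ioo, hx'irr⟩ := TN_good hN hx hxi
      obtain ⟨hy'Ioo, hy'irr⟩ := TN_good hN hy hyi
      have hd' : ∀ i < n, digit N i (TN N x) = digit N i (TN N y) ∧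
          (N:ℤ) ≤ digit N i (TN N x) ∧ digit N i (TN N x) ≤ (M:ℤ) := by
        intro i hi
        have := hd (i+1) (by omega)
        rwa [digit_succ, digit_succ] at this
      have hih := ih (TN N x) (TN N y) hx'Ioo hy'Ioo hx'irr hy'irr hd'
      have hd1 := hd 1 (by omega)
      have hd1x : digit N 0 (TN N x) ≤ (M:ℤ) := by rw [← digit_succ]; exact hd1.2.2
      have hd1y : digit N 0 (TN N y) ≤ (M:ℤ) := by
        rw [← digit_succ, ← hd1.1]; exact hd1.2.2
      have hlbx : (N:ℝ)/((M:ℝ)+1) < TN N x := lb_of_digit_le hN hx'Ioo hd1x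
      have hlby : (N:ℝ)/((M:ℝ)+1) < TN N y := lb_of_digit_le hN hy'Ioo hd1y
      have hd0 := hd 0 (by omega)
      have haN : (N:ℝ) ≤ ((digit N 0 x : ℤ) : ℝ) := by exact_mod_cast hd0.2.1
      have hxeq : x = (N:ℝ) / (((digit N 0 x : ℤ) : ℝ) + TN N x) := x_eq_div hN hx
      have hyeq : y = (N:ℝ) / (((digit N 0 x : ℤ) : ℝ) + TN N y) := by
        rw [hd0.1]; exact x_eq_div hN hy
      have hstep : |x - y| ≤ cM M * |TN N x - TN N y| := by
        calc |x - y| = |(N:ℝ)/(((digit N 0 x : ℤ) : ℝ) + TN N x) -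
            (N:ℝ)/(((digit N 0 x : ℤ) : ℝ) + TN N y)| := by rw [← hxeq, ← hyeq]
          _ ≤ cM M * |TN N x - TN N y| :=
            step_est hN _ _ _ haN hx'Ioo hy'Ioo hlbx hlby
      calc |x - y| ≤ cM M * |TN N x - TN N y| := hstep
        _ ≤ cM M * ((cM M)^n / cM M) := mul_le_mul_of_nonneg_left hih (cM_pos M).le
        _ = (cM M)^(n+1) / cM M := by
            rw [pow_succ, mul_comm ((cM M)^n) (cM M), mul_div_assoc]

lemma fund_full {N : ℕ} (hN : 1 ≤ N) :
    ∀ n : ℕ, ∀ ε : ℕ → ℤ, ∀ a b z : ℝ, a ∈ fundInterval N n ε → b ∈ fundInterval N n ε →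
      Irrational z → a ≤ z → z ≤ b → z ∈ fundInterval N n ε := by
  intro n
  induction n with
  | zero =>
    intro ε a b z ha hb hz haz hzb
    exact ⟨⟨lt_of_lt_of_le ha.1.1 haz, lt_of_le_of_lt hzb hb.1.2⟩, hz, fun i hi => by omega⟩
  | succ n ih =>
    intro ε a b z ha hb hz haz hzb
    have hzIoo : z ∈ Set.Ioo (0:ℝ) 1 := ⟨lt_of_lt_of_le ha.1.1 haz, lt_of_le_of_lt hzb hb.1.2⟩
    have ha0 : (0:ℝ) < a := ha.1.1
    have hz0 : (0:ℝ) < z := hzIoo.1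
    have hb0 : (0:ℝ) < b := hb.1.1
    have hda : digit N 0 a = ε 0 := ha.2.2 0 (Nat.succ_pos n)
    have hdb : digit N 0 b = ε 0 := hb.2.2 0 (Nat.succ_pos n)
    have hNa : (N:ℝ)/b ≤ (N:ℝ)/z := by
      apply div_le_div_of_nonneg_left (by positivity) hz0 hzb
    have hNz : (N:ℝ)/z ≤ (N:ℝ)/a := by
      apply div_le_div_of_nonneg_left (by positivity) ha0 haz
    have hdz : digit N 0 z = ε 0 := by
      rw [digit_zero] at *
      have h1 : ε 0 ≤ ⌊(N:ℝ)/z⌋ := hdb ▸ Int.floor_le_floor hNa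
      have h2 : ⌊(N:ℝ)/z⌋ ≤ ε 0 := hda ▸ Int.floor_le_floor hNz
      omega
    -- TN values and ordering
    have hTa : TN N a = (N:ℝ)/a - ((ε 0 : ℤ):ℝ) := by
      rw [TN, if_neg ha0.ne', ← digit_zero, hda]
    have hTb : TN N b = (N:ℝ)/b - ((ε 0 : ℤ):ℝ) := by
      rw [TN, if_neg hb0.ne', ← digit_zero, hdb]
    have hTz : TN N z = (N:ℝ)/z - ((ε 0 : ℤ):ℝ) := by
      rw [TN, if_neg hz0.ne', ← digit_zero, hdz]
    have hord1 : TN N b ≤ TN N z := by rw [hTb, hTz]; linarith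
    have hord2 : TN N z ≤ TN N a := by rw [hTz, hTa]; linarith
    obtain ⟨haIoo', hairr'⟩ := TN_good hN ha.1 ha.2.1
    obtain ⟨hbIoo', hbirr'⟩ := TN_good hN hb.1 hb.2.1
    obtain ⟨hzIoo', hzirr'⟩ := TN_good hN hzIoo hz
    have hmem : ∀ w : ℝ, w ∈ fundInterval N (n+1) ε → TN N w ∈ Set.Ioo (0:ℝ) 1 →
        Irrational (TN N w) → TN N w ∈ fundInterval N n (fun i => ε (i+1)) := by
      intro w hw h1 h2
      refine ⟨h1, h2, fun i hi => ?_⟩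
      rw [← digit_succ]
      exact hw.2.2 (i+1) (by omega)
    have hz' : TN N z ∈ fundInterval N n (fun i => ε (i+1)) :=
      ih (fun i => ε (i+1)) (TN N b) (TN N a) (TN N z)
        (hmem b hb hbIoo' hbirr') (hmem a ha haIoo' hairr') hzirr' hord1 hord2
    refine ⟨hzIoo, hz, fun i hi => ?_⟩
    cases i with
    | zero => exact hdz
    | succ j =>
      rw [digit_succ]
      exact hz'.2.2 j (by omega)

lemma ratSet_null : volume (Set.range ((↑·) : ℚ → ℝ)) = 0 :=
  (Set.countable_range _).measure_zero _

lemma fund_subset_Ioo (N n : ℕ) (ε : ℕ → ℤ) : fundInterval N n ε ⊆ Set.Ioo (0:ℝ) 1 :=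
  fun _ hw => hw.1

lemma fund_vol_ne_top (N n : ℕ) (ε : ℕ → ℤ) : volume (fundInterval N n ε) ≠ ⊤ := by
  refine ne_top_of_le_ne_top ?_ (measure_mono (fund_subset_Ioo N n ε))
  simp [Real.volume_Ioo]

lemma dist_le_vol {N : ℕ} (hN : 1 ≤ N) (n : ℕ) (ε : ℕ → ℤ) {x y : ℝ}
    (hx : x ∈ fundInterval N n ε) (hy : y ∈ fundInterval N n ε) :
    |x - y| ≤ (volume (fundInterval N n ε)).toReal := by
  have key : ∀ u v : ℝ, u ∈ fundInterval N n ε → v ∈ fundInterval N n ε → u ≤ v →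
      v - u ≤ (volume (fundInterval N n ε)).toReal := by
    intro u v hu hv huv
    have hsub : Set.Ioo u v \ Set.range ((↑·) : ℚ → ℝ) ⊆ fundInterval N n ε := by
      intro z hz
      exact fund_full hN n ε u v z hu hv hz.2 hz.1.1.le hz.1.2.le
    have hvol : ENNReal.ofReal (v - u) ≤ volume (fundInterval N n ε) := by
      calc ENNReal.ofReal (v - u) = volume (Set.Ioo u v \ Set.range ((↑·) : ℚ → ℝ)) := by
            rw [measure_diff_null ratSet_null, Real.volume_Ioo]
        _ ≤ volume (fundInterval N n ε) := measure_mono hsub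
    have := ENNReal.toReal_mono (fund_vol_ne_top N n ε) hvol
    rwa [ENNReal.toReal_ofReal (by linarith)] at this
  rcases le_total x y with hxy | hxy
  · rw [abs_sub_comm, abs_of_nonneg (by linarith)]
    exact key x y hx hy hxy
  · rw [abs_of_nonneg (by linarith)]
    exact key y x hy hx hxy

noncomputable local instance : DecidableEq (ℕ → ℤ) := Classical.decEq _

noncomputable def words (N M : ℕ) : ℕ → Finset (ℕ → ℤ)
  | 0 => {fun _ => (N:ℤ)}
  | (n+1) => ((words N M n) ×ˢ (Finset.Icc (N:ℤ) (M:ℤ))).image fun p => Function.update p.1 n p.2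

lemma words_prop {N M : ℕ} (hNM : N ≤ M) :
    ∀ n : ℕ, ∀ w ∈ words N M n,
      (∀ i < n, (N:ℤ) ≤ w i ∧ w i ≤ (M:ℤ)) ∧ (∀ i, n ≤ i → w i = (N:ℤ)) := by
  intro n
  induction n with
  | zero =>
    intro w hw
    simp only [words, Finset.mem_singleton] at hw
    subst hw
    exact ⟨fun i hi => by omega, fun i _ => rfl⟩
  | succ n ih =>
    intro w hw
    simp only [words, Finset.mem_image, Finset.mem_product] at hw
    obtain ⟨⟨u, k⟩, ⟨hu, hk⟩, rfl⟩ := hw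
    obtain ⟨h1, h2⟩ := ih u hu
    rw [Finset.mem_Icc] at hk
    constructor
    · intro i hi
      rcases Nat.lt_or_ge i n with h | h
      · rw [Function.update_of_ne (by omega)]
        exact h1 i h
      · have : i = n := by omega
        subst this
        rw [Function.update_self]
        exact hk
    · intro i hi
      rw [Function.update_of_ne (by omega)]
      exact h2 i (by omega)

lemma mem_words_of {N M : ℕ} :
    ∀ n : ℕ, ∀ w : ℕ → ℤ, (∀ i < n, (N:ℤ) ≤ w i ∧ w i ≤ (M:ℤ)) →
      (∀ i, n ≤ i → w i = (N:ℤ)) → w ∈ words N M n := by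
  intro n
  induction n with
  | zero =>
    intro w _ h2
    simp only [words, Finset.mem_singleton]
    funext i
    exact h2 i (Nat.zero_le i)
  | succ n ih =>
    intro w h1 h2
    simp only [words, Finset.mem_image, Finset.mem_product]
    refine ⟨(Function.update w n (N:ℤ), w n), ⟨ih _ ?_ ?_, ?_⟩, ?_⟩
    · intro i hi
      dsimp only
      rw [Function.update_of_ne (by omega : i ≠ n)]
      exact h1 i (by omega)
    · intro i hi
      dsimp only
      rcases Nat.eq_or_lt_of_le hi with h | h
      · rw [← h, Function.update_self]
      · rw [Function.update_of_ne (by omega : i ≠ n)]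
        exact h2 i (by omega)
    · rw [Finset.mem_Icc]
      exact h1 n (by omega)
    · funext i
      dsimp only
      rcases eq_or_ne i n with rfl | h
      · rw [Function.update_self]
      · rw [Function.update_of_ne h, Function.update_of_ne h]

lemma sum_words_succ {N M : ℕ} (hNM : N ≤ M) (n : ℕ) (f : (ℕ → ℤ) → ℝ) :
    ∑ w ∈ words N M (n+1), f w =
      ∑ w ∈ words N M n, ∑ k ∈ Finset.Icc (N:ℤ) (M:ℤ), f (Function.update w n k) := by
  rw [words, Finset.sum_image, Finset.sum_product]
  intro p hp q hq hpq
  rw [Finset.mem_coe, Finset.mem_product] at hp hq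
  have hp1 := (words_prop hNM n p.1 hp.1).2 n le_rfl
  have hq1 := (words_prop hNM n q.1 hq.1).2 n le_rfl
  have h2 : p.2 = q.2 := by
    have := congrFun hpq n
    beta_reduce at this
    rwa [Function.update_self, Function.update_self] at this
  have h1 : p.1 = q.1 := by
    funext i
    rcases eq_or_ne i n with rfl | h
    · rw [hp1, hq1]
    · have := congrFun hpq i
      beta_reduce at this
      rwa [Function.update_of_ne h, Function.update_of_ne h] at this
  exact Prod.ext h1 h2

lemma fund_zero_vol (N : ℕ) (ε : ℕ → ℤ) : volume (fundInterval N 0 ε) = 1 := by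
  have : fundInterval N 0 ε = Set.Ioo (0:ℝ) 1 \ Set.range ((↑·) : ℚ → ℝ) := by
    ext x
    simp only [fundInterval, Set.mem_setOf_eq, Set.mem_diff, Irrational]
    constructor
    · rintro ⟨h1, h2, _⟩; exact ⟨h1, h2⟩
    · rintro ⟨h1, h2⟩; exact ⟨h1, h2, fun i hi => by omega⟩
  rw [this, measure_diff_null ratSet_null, Real.volume_Ioo]
  norm_num

/-- Covering argument for `E_M`: if for every `n ≥ 1` and every admissible
word `(ε_1, …, ε_{n-1}) ∈ {N, …, M}^{n-1}` one has
`|I_{n-1}(ε_1, …, ε_{n-1})|^s ≥ ∑_{k=N}^{M} |I_n(ε_1, …, ε_{n-1}, k)|^s`,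
then `dim_H(E_M) ≤ s`.  (Here the word of length `n` is stated via `n ↦ n+1`:
the parent interval has order `n` and its children order `n+1`, with the appended
digit placed at position `n` via `Function.update`.) -/
theorem stmt_16 (N M : ℕ) (hN : 1 ≤ N) (hNM : N ≤ M) (s : ℝ) (hs : s ∈ Set.Ioo (0 : ℝ) 1)
    (h : ∀ n : ℕ, ∀ ε : ℕ → ℤ, (∀ i, (N : ℤ) ≤ ε i ∧ ε i ≤ (M : ℤ)) →
      ∑ k ∈ Finset.Icc (N : ℤ) (M : ℤ),
          (volume (fundInterval N (n + 1) (Function.update ε n k))).toReal ^ s ≤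
        (volume (fundInterval N n ε)).toReal ^ s) :
    dimH (EM N M) ≤ ENNReal.ofReal s := by
  have hs0 : 0 < s := hs.1
  -- total mass bound at each level
  have hSbound : ∀ n, ∑ w ∈ words N M n, (volume (fundInterval N n w)).toReal ^ s ≤ 1 := by
    intro n
    induction n with
    | zero =>
      rw [words, Finset.sum_singleton, fund_zero_vol]
      simp
    | succ n ih =>
      rw [sum_words_succ hNM n]
      refine le_trans (Finset.sum_le_sum fun w hw => h n w fun i => ?_) ih
      obtain ⟨h1, h2⟩ := words_prop hNM n w hw
      rcases Nat.lt_or_ge i n with hi | hi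
      · exact h1 i hi
      · rw [h2 i hi]
        exact ⟨le_refl _, by exact_mod_cast hNM⟩
  have hc0 := cM_pos M
  have hc1 := cM_lt_one M
  have hr : Tendsto (fun n : ℕ => ENNReal.ofReal ((cM M)^n / cM M)) atTop (𝓝 0) := by
    have h1 : Tendsto (fun n : ℕ => (cM M)^n / cM M) atTop (𝓝 0) := by
      simpa using (tendsto_pow_atTop_nhds_zero_of_lt_one hc0.le hc1).div_const (cM M)
    have := ENNReal.tendsto_ofReal h1
    simpa using this
  have hdiam : ∀ n : ℕ, ∀ w : ℕ → ℤ, w ∈ words N M n →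
      EMetric.diam (fundInterval N n w) ≤ ENNReal.ofReal ((cM M)^n / cM M) := by
    intro n w hw
    apply EMetric.diam_le
    intro x hx y hy
    rw [edist_dist, Real.dist_eq]
    apply ENNReal.ofReal_le_ofReal
    apply contract hN hNM n x y hx.1 hy.1 hx.2.1 hy.2.1
    intro i hi
    obtain ⟨h1, _⟩ := words_prop hNM n w hw
    refine ⟨by rw [hx.2.2 i hi, hy.2.2 i hi], ?_, ?_⟩
    · rw [hx.2.2 i hi]; exact (h1 i hi).1
    · rw [hx.2.2 i hi]; exact (h1 i hi).2
  have hcover : ∀ n : ℕ, EM N M ⊆ ⋃ w : (words N M n), fundInterval N n (w : ℕ → ℤ) := by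
    intro n x hx
    have hmem : (fun i => if i < n then digit N i x else (N:ℤ)) ∈ words N M n := by
      apply mem_words_of n
      · intro i hi
        simp only [if_pos hi]
        exact hx.2.2 i
      · intro i hi
        simp only [if_neg (by omega : ¬ i < n)]
    refine Set.mem_iUnion.2 ⟨⟨_, hmem⟩, hx.1, hx.2.1, fun i hi => ?_⟩
    simp only [if_pos hi]
  have hH := Measure.hausdorffMeasure_le_liminf_sum s (EM N M)
    (fun n : ℕ => ENNReal.ofReal ((cM M)^n / cM M)) hr
    (fun n (w : (words N M n)) => fundInterval N n (w : ℕ → ℤ))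
    (Filter.Eventually.of_forall fun n => fun i => hdiam n (i : ℕ → ℤ) i.2)
    (Filter.Eventually.of_forall hcover)
  have hsum1 : ∀ n : ℕ,
      ∑ i : (words N M n), EMetric.diam (fundInterval N n (i : ℕ → ℤ)) ^ s ≤ 1 := by
    intro n
    calc ∑ i : (words N M n), EMetric.diam (fundInterval N n (i : ℕ → ℤ)) ^ s
        ≤ ∑ i : (words N M n),
            ENNReal.ofReal ((volume (fundInterval N n (i : ℕ → ℤ))).toReal ^ s) := by
          refine Finset.sum_le_sum fun i _ => ?_
          have hd : EMetric.diam (fundInterval N n (i : ℕ → ℤ)) ≤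
              ENNReal.ofReal ((volume (fundInterval N n (i : ℕ → ℤ))).toReal) := by
            apply EMetric.diam_le
            intro x hx y hy
            rw [edist_dist, Real.dist_eq]
            exact ENNReal.ofReal_le_ofReal (dist_le_vol hN n _ hx hy)
          calc EMetric.diam (fundInterval N n (i : ℕ → ℤ)) ^ s
              ≤ ENNReal.ofReal ((volume (fundInterval N n (i : ℕ → ℤ))).toReal) ^ s :=
                ENNReal.rpow_le_rpow hd hs0.le
            _ = ENNReal.ofReal ((volume (fundInterval N n (i : ℕ → ℤ))).toReal ^ s) :=
                ENNReal.ofReal_rpow_of_nonneg ENNReal.toReal_nonneg hs0.le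
      _ = ENNReal.ofReal (∑ i : (words N M n),
            (volume (fundInterval N n (i : ℕ → ℤ))).toReal ^ s) :=
          (ENNReal.ofReal_sum_of_nonneg fun i _ =>
            Real.rpow_nonneg ENNReal.toReal_nonneg s).symm
      _ = ENNReal.ofReal (∑ w ∈ words N M n, (volume (fundInterval N n w)).toReal ^ s) :=
          congrArg ENNReal.ofReal (Finset.sum_coe_sort (words N M n)
            (fun w => (volume (fundInterval N n w)).toReal ^ s))
      _ ≤ ENNReal.ofReal 1 := ENNReal.ofReal_le_ofReal (hSbound n)
      _ = 1 := ENNReal.ofReal_one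
  have hlim : μH[s] (EM N M) ≤ 1 := by
    refine hH.trans ?_
    calc liminf (fun n => ∑ i : (words N M n),
          EMetric.diam (fundInterval N n (i : ℕ → ℤ)) ^ s) atTop
        ≤ liminf (fun _ : ℕ => (1 : ℝ≥0∞)) atTop :=
          Filter.liminf_le_liminf (Filter.Eventually.of_forall hsum1)
      _ = 1 := Filter.liminf_const 1
  have hne : μH[(s.toNNReal : ℝ)] (EM N M) ≠ ⊤ := by
    rw [Real.coe_toNNReal s hs0.le]
    exact (hlim.trans_lt ENNReal.one_lt_top).ne
  have hdim := dimH_le_of_hausdorffMeasure_ne_top hne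
  rwa [ENNReal.ofReal]
end

section
/- Let N ≥ 1 and M ≥ N be integers, let s ∈ (0,1], and let q, q' be real numbers with q > 0 and q' ≥ 0. Then Σ_{k=N}^{M} ((kq + Nq')(( k+1)q + Nq'))^{−s} ≥ ((N+1)^{1−s} / (N^s · q^s · (q+q')^s)) · (1 − N(q+q') / ((M+1)q + Nq')). -/
open MeasureTheory Filter Set
open scoped ENNReal

/-- Key summation estimate: for integers `M ≥ N ≥ 1`, `s ∈ (0,1]`, and reals
`q > 0`, `q' ≥ 0`,
`∑_{k=N}^{M} ((kq + Nq')((k+1)q + Nq'))^{-s}`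
`≥ ((N+1)^{1-s} / (N^s q^s (q+q')^s)) · (1 - N(q+q') / ((M+1)q + Nq'))`. -/
theorem stmt_17 (N M : ℤ) (hN : 1 ≤ N) (hNM : N ≤ M) (s : ℝ) (hs : 0 < s) (hs1 : s ≤ 1)
    (q q' : ℝ) (hq : 0 < q) (hq' : 0 ≤ q') :
    ((N : ℝ) + 1) ^ (1 - s) / ((N : ℝ) ^ s * q ^ s * (q + q') ^ s) *
        (1 - (N : ℝ) * (q + q') / (((M : ℝ) + 1) * q + (N : ℝ) * q')) ≤
      ∑ k ∈ Finset.Icc N M,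
        (((k : ℝ) * q + (N : ℝ) * q') * (((k : ℝ) + 1) * q + (N : ℝ) * q')) ^ (-s) := by
  have hN0 : (0:ℝ) < (N:ℝ) := by exact_mod_cast hN.trans_lt' (by norm_num)
  set a : ℤ → ℝ := fun k => (k:ℝ) * q + (N:ℝ) * q' with ha
  have hstep : ∀ k : ℤ, a (k+1) = a k + q := by
    intro k; simp only [ha]; push_cast; ring
  have hapos : ∀ k : ℤ, N ≤ k → 0 < a k := by
    intro k hk
    have hk0 : (0:ℝ) < (k:ℝ) := lt_of_lt_of_le hN0 (by exact_mod_cast hk)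
    have h1 : 0 < (k:ℝ) * q := mul_pos hk0 hq
    have h2 : 0 ≤ (N:ℝ) * q' := by positivity
    simp only [ha]; linarith
  have hamono : ∀ j k : ℤ, N ≤ j → j ≤ k → a j ≤ a k := by
    intro j k _ hjk
    have : (j:ℝ) ≤ (k:ℝ) := by exact_mod_cast hjk
    simp only [ha]; nlinarith
  set C : ℝ := (a N * a (N+1)) ^ (1 - s) with hC
  have haN : 0 < a N := hapos N le_rfl
  have haN1 : 0 < a (N+1) := hapos (N+1) (by omega)
  have hCpos : 0 < C := Real.rpow_pos_of_pos (by positivity) _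
  have key : ∀ k ∈ Finset.Icc N M,
      C * (1 / (a k * a (k+1))) ≤ (a k * a (k+1)) ^ (-s) := by
    intro k hk
    rw [Finset.mem_Icc] at hk
    have hak : 0 < a k := hapos k hk.1
    have hak1 : 0 < a (k+1) := hapos (k+1) (by omega)
    have hb : 0 < a k * a (k+1) := by positivity
    have h1 : C ≤ (a k * a (k+1)) ^ (1 - s) := by
      apply Real.rpow_le_rpow (by positivity) _ (by linarith)
      exact mul_le_mul (hamono N k le_rfl hk.1) (hamono (N+1) (k+1) (by omega) (by omega))
        haN1.le hak.le
    have h2 : (a k * a (k+1)) ^ (-s) = (a k * a (k+1)) ^ (1 - s) * (1 / (a k * a (k+1))) := by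
      rw [one_div, ← Real.rpow_neg_one (a k * a (k+1)), ← Real.rpow_add hb]
      ring_nf
    rw [h2]
    exact mul_le_mul_of_nonneg_right h1 (by positivity)
  have hins : ∀ m : ℤ, N ≤ m + 1 → Finset.Icc N (m+1) = insert (m+1) (Finset.Icc N m) := by
    intro m hm; ext x; simp only [Finset.mem_Icc, Finset.mem_insert]; omega
  have tel : ∀ M' : ℤ, N ≤ M' →
      ∑ k ∈ Finset.Icc N M', (1 / (a k * a (k+1))) = (1/q) * (1/(a N) - 1/(a (M'+1))) := by
    refine fun M' => Int.le_induction
      (motive := fun n _ => ∑ k ∈ Finset.Icc N n, (1 / (a k * a (k+1)))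
        = (1/q) * (1/(a N) - 1/(a (n+1)))) ?_ ?_ M'
    · rw [Finset.Icc_self, Finset.sum_singleton]
      have h1 := hapos N le_rfl
      have h2 := hapos (N+1) (by omega)
      rw [hstep N] at h2 ⊢
      field_simp
      try ring
    · intro m hm ih
      rw [hins m (by omega), Finset.sum_insert (by simp [Finset.mem_Icc]), ih]
      have h1 := hapos (m+1) (by omega)
      have h2 := hapos (m+1+1) (by omega)
      have h0 := hapos N le_rfl
      rw [hstep (m+1)] at h2 ⊢
      field_simp
      try ring
  have hsum : C * ((1/q) * (1/(a N) - 1/(a (M+1)))) ≤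
      ∑ k ∈ Finset.Icc N M,
        (((k : ℝ) * q + (N : ℝ) * q') * (((k : ℝ) + 1) * q + (N : ℝ) * q')) ^ (-s) := by
    have hcg : ∀ k ∈ Finset.Icc N M,
        (((k : ℝ) * q + (N : ℝ) * q') * (((k : ℝ) + 1) * q + (N : ℝ) * q')) ^ (-s)
        = (a k * a (k+1)) ^ (-s) := by
      intro k _
      have : ((k : ℝ) * q + (N : ℝ) * q') * (((k : ℝ) + 1) * q + (N : ℝ) * q')
          = a k * a (k+1) := by simp only [ha]; push_cast; ring
      rw [this]
    rw [Finset.sum_congr rfl hcg]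
    calc C * ((1/q) * (1/(a N) - 1/(a (M+1))))
        = ∑ k ∈ Finset.Icc N M, C * (1 / (a k * a (k+1))) := by
          rw [← Finset.mul_sum, tel M hNM]
      _ ≤ _ := Finset.sum_le_sum key
  refine le_trans ?_ hsum
  have haM1 : 0 < a (M+1) := hapos (M+1) (by omega)
  have haNM : a N ≤ a (M+1) := hamono N (M+1) le_rfl (by omega)
  have hD : (0:ℝ) ≤ 1 - a N / a (M+1) := by
    rw [sub_nonneg, div_le_one haM1]; exact haNM
  have hDrw : 1 - (N : ℝ) * (q + q') / (((M : ℝ) + 1) * q + (N : ℝ) * q')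
      = 1 - a N / a (M+1) := by
    have e1 : (N : ℝ) * (q + q') = a N := by simp only [ha]; ring
    have e2 : ((M : ℝ) + 1) * q + (N : ℝ) * q' = a (M+1) := by
      simp only [ha]; push_cast; ring
    rw [e1, e2]
  have hfs : 1/(a N) - 1/(a (M+1)) = (1/(a N)) * (1 - a N / a (M+1)) := by
    field_simp
  have hinv : C / (q * a N) = C * (1/q) * (1/(a N)) := by
    rw [div_eq_mul_inv, mul_inv]; ring
  have hrhs : C * ((1/q) * (1/(a N) - 1/(a (M+1)))) = C / (q * a N) * (1 - a N / a (M+1)) := by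
    rw [hfs, hinv]; ring
  rw [hDrw, hrhs]
  apply mul_le_mul_of_nonneg_right _ hD
  have hq2 : (0:ℝ) < q + q' := by linarith
  set P : ℝ := (a (N+1)) ^ (1-s) with hP
  have hCeq : C = (a N) ^ (1-s) * P := Real.mul_rpow haN.le haN1.le
  have haNval : a N = (N:ℝ) * (q + q') := by simp only [ha]; ring
  have hsplit : (a N) ^ (1-s) = (N:ℝ) ^ (1-s) * (q+q') ^ (1-s) := by
    rw [haNval]; exact Real.mul_rpow hN0.le hq2.le
  have hbnd : ((N:ℝ)+1) ^ (1-s) * q ^ (1-s) ≤ P := by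
    rw [hP, ← Real.mul_rpow (by positivity) hq.le]
    apply Real.rpow_le_rpow (by positivity) _ (by linarith)
    simp only [ha]
    push_cast
    nlinarith
  have e1 : (N:ℝ)^(1-s) * (N:ℝ)^s = (N:ℝ) := by
    rw [← Real.rpow_add hN0, show (1:ℝ)-s+s = 1 by ring, Real.rpow_one]
  have e2 : q^(1-s) * q^s = q := by
    rw [← Real.rpow_add hq, show (1:ℝ)-s+s = 1 by ring, Real.rpow_one]
  have e3 : (q+q')^(1-s) * (q+q')^s = q+q' := by
    rw [← Real.rpow_add hq2, show (1:ℝ)-s+s = 1 by ring, Real.rpow_one]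
  have hfinal : ((N:ℝ)+1)^(1-s) * q ≤ P * q^s := by
    calc ((N:ℝ)+1)^(1-s) * q = (((N:ℝ)+1)^(1-s) * q^(1-s)) * q^s := by
          rw [mul_assoc, e2]
      _ ≤ P * q^s := mul_le_mul_of_nonneg_right hbnd (by positivity)
  rw [div_le_div_iff₀ (by positivity) (by positivity), hCeq, hsplit, haNval]
  calc ((N:ℝ)+1) ^ (1-s) * (q * ((N:ℝ)*(q+q')))
      = (((N:ℝ)+1)^(1-s) * q) * ((N:ℝ) * (q+q')) := by ring
    _ ≤ (P * q^s) * ((N:ℝ) * (q+q')) := by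
        apply mul_le_mul_of_nonneg_right hfinal (by positivity)
    _ = (P * q^s) * (((N:ℝ)^(1-s) * (N:ℝ)^s) * ((q+q')^(1-s) * (q+q')^s)) := by
        rw [e1, e3]
    _ = (N:ℝ)^(1-s) * (q+q')^(1-s) * P * ((N:ℝ)^s * q^s * (q+q')^s) := by ring
end
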